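/- arXiv:1609.06615 — 2 statements merged into one kernel-verified Lean document; each statement's English description precedes it below -/
import Mathlib

section
/- Let A be an n×n complex matrix (n ≥ 1) and p ∈ [1, ∞). Then the identity matrix I is Birkhoff–James orthogonal to A with respect to the Schatten p-norm, i.e. ‖I‖ₚ ≤ ‖I + γ·A‖ₚ for all γ ∈ ℂ (note ‖I‖ₚ = n^{1/p}), if and only if tr(A) = 0. -/
open Matrix ComplexOrder

/-- The square root of a positive semidefinite matrix (as defined in older Mathlib). -/
noncomputable def Matrix.PosSemidef.sqrt {n : Type*} [Fintype n] [DecidableEq n]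
    {A : Matrix n n ℂ} (hA : A.PosSemidef) : Matrix n n ℂ :=
  (hA.1.eigenvectorUnitary : Matrix n n ℂ) * diagonal (fun i => ((√(hA.1.eigenvalues i) : ℝ) : ℂ)) *
    (star hA.1.eigenvectorUnitary : Matrix n n ℂ)

theorem Matrix.PosSemidef.posSemidef_sqrt {n : Type*} [Fintype n] [DecidableEq n]
    {A : Matrix n n ℂ} (hA : A.PosSemidef) : PosSemidef hA.sqrt := by
  unfold Matrix.PosSemidef.sqrt
  have h := (posSemidef_diagonal_iff (d := (fun i => ((√(hA.1.eigenvalues i) : ℝ) : ℂ)))).2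
    (fun i => by simp [Real.sqrt_nonneg])
  simpa [star_eq_conjTranspose] using h.mul_mul_conjTranspose_same (hA.1.eigenvectorUnitary : Matrix n n ℂ)

/-- The absolute value `|A| = (AᴴA)^(1/2)` of a complex matrix `A`. -/
noncomputable def matAbs {n : ℕ} (A : Matrix (Fin n) (Fin n) ℂ) : Matrix (Fin n) (Fin n) ℂ :=
  (Matrix.posSemidef_conjTranspose_mul_self A).sqrt

/-- The Schatten `p`-norm `‖A‖ₚ = (tr |A|^p)^(1/p)`, computed via the eigenvalues of `|A|`. -/
noncomputable def schattenNorm {n : ℕ} (p : ℝ) (A : Matrix (Fin n) (Fin n) ℂ) : ℝ :=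
  (∑ i, ((Matrix.posSemidef_conjTranspose_mul_self A).posSemidef_sqrt.1.eigenvalues i) ^ p) ^ (1 / p)

namespace BJAux

variable {n : ℕ}

/-- Mean value theorem for `rpow`. -/
lemma mvt_rpow (r : ℝ) {a b : ℝ} (ha : 0 < a) (hab : a < b) :
    ∃ c, a < c ∧ c < b ∧ b ^ r - a ^ r = r * c ^ (r - 1) * (b - a) := by
  obtain ⟨c, hc, hc'⟩ := exists_hasDerivAt_eq_slope (fun z : ℝ => z ^ r)
    (fun z : ℝ => r * z ^ (r - 1)) hab
    (continuousOn_of_forall_continuousAt fun z hz =>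
      Real.continuousAt_rpow_const z r (Or.inl (ne_of_gt (lt_of_lt_of_le ha hz.1))))
    (fun z hz => Real.hasDerivAt_rpow_const (Or.inl (ne_of_gt (ha.trans hz.1))))
  refine ⟨c, hc.1, hc.2, ?_⟩
  rw [hc', div_mul_cancel₀ _ (sub_ne_zero.mpr hab.ne')]

/-- `y ^ (q-1)` is Lipschitz near 1. -/
lemma rpow_sub_one_bound (q : ℝ) {y : ℝ} (hy1 : 1/2 ≤ y) (hy2 : y ≤ 3/2) :
    |y ^ (q - 1) - 1| ≤ (|q - 1| * 2 ^ |q - 2|) * |y - 1| := by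
  have key : ∀ c : ℝ, 1/2 ≤ c → c ≤ 3/2 → c ^ (q - 2) ≤ 2 ^ |q - 2| := by
    intro c hc1 hc2
    have hc0 : (0:ℝ) < c := by linarith
    rcases le_or_gt 0 (q - 2) with h | h
    · calc c ^ (q - 2) ≤ 2 ^ (q - 2) :=
            Real.rpow_le_rpow hc0.le (by linarith) h
        _ = 2 ^ |q - 2| := by rw [abs_of_nonneg h]
    · calc c ^ (q - 2) ≤ (1/2 : ℝ) ^ (q - 2) :=
            Real.rpow_le_rpow_of_nonpos (by norm_num) hc1 h.le
        _ = 2 ^ (-(q - 2)) := by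
            rw [one_div, Real.inv_rpow (by norm_num : (0:ℝ) ≤ 2),
              Real.rpow_neg (by norm_num : (0:ℝ) ≤ 2)]
        _ = 2 ^ |q - 2| := by rw [abs_of_neg h]
  rcases lt_trichotomy y 1 with h | h | h
  · obtain ⟨c, hc1, hc2, hc3⟩ := mvt_rpow (q - 1) (by linarith : (0:ℝ) < y) h
    have : 1 - y ^ (q - 1) = (q - 1) * c ^ ((q - 1) - 1) * (1 - y) := by
      simpa using hc3
    have hb := key c (by linarith) (by linarith)
    have hcpos : (0:ℝ) < c := by linarith
    have hcn : 0 ≤ c ^ (q - 2) := Real.rpow_nonneg hcpos.le _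
    rw [show y ^ (q-1) - 1 = -((1:ℝ) - y ^ (q-1)) by ring, abs_neg, this]
    rw [show (q - 1) - 1 = q - 2 by ring, abs_mul, abs_mul]
    rw [abs_of_nonneg hcn, show |1 - y| = |y - 1| by rw [abs_sub_comm]]
    have h1 : 0 ≤ |y - 1| := abs_nonneg _
    have h2 : 0 ≤ |q - 1| := abs_nonneg _
    calc |q-1| * c ^ (q-2) * |y-1| ≤ |q-1| * 2 ^ |q-2| * |y-1| := by
          apply mul_le_mul_of_nonneg_right _ h1
          exact mul_le_mul_of_nonneg_left hb h2
      _ = _ := rfl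
  · simp [h]
  · obtain ⟨c, hc1, hc2, hc3⟩ := mvt_rpow (q - 1) (by norm_num : (0:ℝ) < 1) h
    rw [Real.one_rpow] at hc3
    have hb := key c (by linarith) (by linarith)
    have hcn : 0 ≤ c ^ (q - 2) := Real.rpow_nonneg (by linarith) _
    rw [hc3, show (q - 1) - 1 = q - 2 by ring, abs_mul, abs_mul, abs_of_nonneg hcn]
    apply mul_le_mul_of_nonneg_right _ (abs_nonneg _)
    exact mul_le_mul_of_nonneg_left hb (abs_nonneg _)

/-- Taylor-type upper bound for `x ^ q` near 1. -/
lemma rpow_taylor (q : ℝ) (hq : 0 < q) {x : ℝ} (hx1 : 1/2 ≤ x) (hx2 : x ≤ 3/2) :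
    x ^ q ≤ 1 + q * (x - 1) + (q * (|q - 1| * 2 ^ |q - 2|)) * (x - 1) ^ 2 := by
  set L : ℝ := |q - 1| * 2 ^ |q - 2| with hL
  have hL0 : 0 ≤ L := mul_nonneg (abs_nonneg _) (Real.rpow_nonneg (by norm_num) _)
  have key : ∀ c : ℝ, 1/2 ≤ c → c ≤ 3/2 → |c - 1| ≤ |x - 1| →
      x ^ q - 1 = q * c ^ (q - 1) * (x - 1) → x ^ q ≤ 1 + q * (x-1) + (q*L) * (x-1)^2 := by
    intro c hc1 hc2 hcx heq
    have h1 : x ^ q - 1 - q * (x - 1) = q * (c ^ (q-1) - 1) * (x - 1) := by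
      rw [heq]; ring
    have h2 : |q * (c ^ (q-1) - 1) * (x - 1)| ≤ q * (L * |x-1|) * |x-1| := by
      rw [abs_mul, abs_mul, abs_of_nonneg hq.le]
      have := rpow_sub_one_bound q hc1 hc2
      have h3 : |c ^ (q-1) - 1| ≤ L * |x - 1| :=
        this.trans (mul_le_mul_of_nonneg_left hcx hL0)
      exact mul_le_mul_of_nonneg_right
        (mul_le_mul_of_nonneg_left h3 hq.le) (abs_nonneg _)
    have h4 : x ^ q - 1 - q * (x - 1) ≤ q * L * (x-1)^2 := by
      have := (le_abs_self _).trans (h1 ▸ h2)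
      calc x ^ q - 1 - q * (x-1) ≤ q * (L * |x-1|) * |x-1| := by rw [← h1] at h2; exact (le_abs_self _).trans h2
        _ = q * L * (|x-1|)^2 := by ring
        _ = q * L * (x-1)^2 := by rw [sq_abs]
    linarith
  rcases lt_trichotomy x 1 with h | h | h
  · obtain ⟨c, hc1, hc2, hc3⟩ := mvt_rpow q (by linarith : (0:ℝ) < x) h
    have heq : x ^ q - 1 = q * c ^ (q - 1) * (x - 1) := by
      have : 1 - x ^ q = q * c ^ (q-1) * (1 - x) := by simpa using hc3
      linarith [this]
    exact key c (by linarith) (by linarith)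
      (by rw [abs_of_neg (by linarith : c - 1 < 0), abs_of_neg (by linarith : x - 1 < 0)]; linarith)
      heq
  · simp [h]
  · obtain ⟨c, hc1, hc2, hc3⟩ := mvt_rpow q (by norm_num : (0:ℝ) < 1) h
    rw [Real.one_rpow] at hc3
    exact key c (by linarith) (by linarith)
      (by rw [abs_of_pos (by linarith), abs_of_pos (by linarith)]; linarith) hc3

lemma trace_conj_diag (U : Matrix.unitaryGroup (Fin n) ℂ) (d : Fin n → ℂ) :
    ((U : Matrix (Fin n) (Fin n) ℂ) * Matrix.diagonal d * star (U : Matrix (Fin n) (Fin n) ℂ)).trace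
      = ∑ i, d i := by
  rw [Matrix.trace_mul_cycle, (Matrix.mem_unitaryGroup_iff').mp U.2,
    Matrix.one_mul, Matrix.trace_diagonal]

lemma conj_pow (U : Matrix.unitaryGroup (Fin n) ℂ) (D : Matrix (Fin n) (Fin n) ℂ) (k : ℕ) :
    ((U : Matrix (Fin n) (Fin n) ℂ) * D * star (U : Matrix (Fin n) (Fin n) ℂ)) ^ k
      = (U : Matrix (Fin n) (Fin n) ℂ) * D ^ k * star (U : Matrix (Fin n) (Fin n) ℂ) := by
  induction k with
  | zero => simp [(Matrix.mem_unitaryGroup_iff).mp U.2]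
  | succ k ih =>
      rw [pow_succ, ih, pow_succ]
      have h1 : star (U : Matrix (Fin n) (Fin n) ℂ) * (U : Matrix (Fin n) (Fin n) ℂ) = 1 :=
        (Matrix.mem_unitaryGroup_iff').mp U.2
      calc (U : Matrix (Fin n) (Fin n) ℂ) * D ^ k * star (U : Matrix (Fin n) (Fin n) ℂ) *
            ((U : Matrix (Fin n) (Fin n) ℂ) * D * star (U : Matrix (Fin n) (Fin n) ℂ))
          = (U : Matrix (Fin n) (Fin n) ℂ) * D ^ k *
            (star (U : Matrix (Fin n) (Fin n) ℂ) * (U : Matrix (Fin n) (Fin n) ℂ)) * D *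
            star (U : Matrix (Fin n) (Fin n) ℂ) := by
            simp only [Matrix.mul_assoc]
        _ = (U : Matrix (Fin n) (Fin n) ℂ) * (D ^ k * D) * star (U : Matrix (Fin n) (Fin n) ℂ) := by
            rw [h1]; simp only [Matrix.mul_assoc, Matrix.mul_one]
        _ = _ := by rw [← pow_succ]

lemma trace_pow_eq {S : Matrix (Fin n) (Fin n) ℂ} (hS : S.IsHermitian) (k : ℕ) :
    (S ^ k).trace = ((∑ i, hS.eigenvalues i ^ k : ℝ) : ℂ) := by
  conv_lhs => rw [hS.spectral_theorem]
  rw [Unitary.conjStarAlgAut_apply, conj_pow, Matrix.diagonal_pow, trace_conj_diag]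
  push_cast
  rfl

lemma sqrt_mul_self' {A : Matrix (Fin n) (Fin n) ℂ} (hA : A.PosSemidef) : hA.sqrt * hA.sqrt = A := by
  conv_rhs => rw [hA.1.spectral_theorem, Unitary.conjStarAlgAut_apply]
  unfold Matrix.PosSemidef.sqrt
  rw [← sq, conj_pow, Matrix.diagonal_pow]
  have h3 : ((fun i => ((√(hA.1.eigenvalues i) : ℝ) : ℂ)) ^ 2) = RCLike.ofReal ∘ hA.1.eigenvalues :=
    funext fun i => by
      simp only [Pi.pow_apply, Function.comp_apply]
      rw [← Complex.ofReal_pow, Real.sq_sqrt (hA.eigenvalues_nonneg i)]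
      rfl
  rw [h3]

lemma sq_sqrt' {A : Matrix (Fin n) (Fin n) ℂ} (hA : A.PosSemidef) : hA.sqrt ^ 2 = A := by
  rw [sq, sqrt_mul_self']


local notation "⟪" x ", " y "⟫" => @inner ℂ _ _ x y

/-- eigenvector self dot product is 1 -/
lemma eigvec_dot_self {S : Matrix (Fin n) (Fin n) ℂ} (hS : S.IsHermitian) (i : Fin n) :
    dotProduct (star ⇑(hS.eigenvectorBasis i)) ⇑(hS.eigenvectorBasis i) = 1 := by
  have h := EuclideanSpace.inner_eq_star_dotProduct (hS.eigenvectorBasis i) (hS.eigenvectorBasis i)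
  rw [inner_self_eq_norm_sq_to_K, hS.eigenvectorBasis.orthonormal.1 i] at h
  simpa [dotProduct_comm] using h.symm

lemma abs_trace_le_sum_sigma (B : Matrix (Fin n) (Fin n) ℂ) :
    ‖B.trace‖ ≤
      ∑ i, (Matrix.posSemidef_conjTranspose_mul_self B).posSemidef_sqrt.1.eigenvalues i := by
  set hM := Matrix.posSemidef_conjTranspose_mul_self B
  set hS := hM.posSemidef_sqrt.1 with hhS
  set σ : Fin n → ℝ := hS.eigenvalues with hσ
  have hσ0 : ∀ i, 0 ≤ σ i := hM.posSemidef_sqrt.eigenvalues_nonneg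
  set U : Matrix (Fin n) (Fin n) ℂ := (hS.eigenvectorUnitary : Matrix (Fin n) (Fin n) ℂ) with hU
  -- trace B = trace (star U * B * U)
  have h1 : B.trace = (star U * B * U).trace := by
    rw [Matrix.trace_mul_cycle, hU,
      (Matrix.mem_unitaryGroup_iff).mp hS.eigenvectorUnitary.2, Matrix.one_mul]
  -- entries
  have h2 : ∀ j, (star U * B * U) j j
      = dotProduct (star ⇑(hS.eigenvectorBasis j)) (B *ᵥ ⇑(hS.eigenvectorBasis j)) := by
    intro j
    simp only [Matrix.mul_apply, Matrix.star_apply, dotProduct, Matrix.mulVec,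
      dotProduct, hU, Matrix.IsHermitian.eigenvectorUnitary_apply, Pi.star_apply,
      Finset.sum_mul, Finset.mul_sum]
    rw [Finset.sum_comm]
    congr 1; ext a; congr 1; ext b; ring
  -- bound each entry
  have h3 : ∀ j, ‖(star U * B * U) j j‖ ≤ σ j := by
    intro j
    rw [h2]
    set u : EuclideanSpace ℂ (Fin n) := hS.eigenvectorBasis j with hu
    have hnu : ‖u‖ = 1 := hS.eigenvectorBasis.orthonormal.1 j
    set y : EuclideanSpace ℂ (Fin n) := (WithLp.equiv 2 (Fin n → ℂ)).symm (B *ᵥ ⇑u) with hy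
    have hinner : ⟪u, y⟫ = dotProduct (star ⇑u) (B *ᵥ ⇑u) := by
      rw [EuclideanSpace.inner_eq_star_dotProduct, dotProduct_comm]; rfl
    -- ‖y‖ ^ 2 = σ j ^ 2
    have hBu : (Bᴴ * B) *ᵥ ⇑u = (σ j ^ 2 : ℝ) • ⇑u := by
      have hsq : hM.sqrt * hM.sqrt = Bᴴ * B := sqrt_mul_self' hM
      have hev : hM.sqrt *ᵥ ⇑u = σ j • ⇑u := hS.mulVec_eigenvectorBasis j
      calc (Bᴴ * B) *ᵥ ⇑u = hM.sqrt *ᵥ (hM.sqrt *ᵥ ⇑u) := by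
            rw [Matrix.mulVec_mulVec, hsq]
        _ = hM.sqrt *ᵥ (σ j • ⇑u) := by rw [hev]
        _ = σ j • (hM.sqrt *ᵥ ⇑u) := by rw [Matrix.mulVec_smul]
        _ = (σ j ^ 2 : ℝ) • ⇑u := by rw [hev, smul_smul, sq]
    have hyy : ⟪y, y⟫ = ((σ j ^ 2 : ℝ) : ℂ) := by
      rw [EuclideanSpace.inner_eq_star_dotProduct, dotProduct_comm]
      show dotProduct (star (B *ᵥ ⇑u)) (B *ᵥ ⇑u) = _
      rw [Matrix.star_mulVec, ← Matrix.dotProduct_mulVec, Matrix.mulVec_mulVec, hBu,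
        dotProduct_smul]
      rw [eigvec_dot_self hS j]
      simp [RCLike.real_smul_eq_coe_mul]
    have hny : ‖y‖ = σ j := by
      have h5 : (‖y‖ ^ 2 : ℝ) = σ j ^ 2 := by
        have h6 := (inner_self_eq_norm_sq_to_K (𝕜 := ℂ) y).symm.trans hyy
        rw [← RCLike.ofReal_pow] at h6
        exact RCLike.ofReal_inj.mp h6
      nlinarith [norm_nonneg y, hσ0 j]
    calc ‖dotProduct (star ⇑u) (B *ᵥ ⇑u)‖
        = ‖⟪u, y⟫‖ := by rw [hinner]
      _ ≤ ‖u‖ * ‖y‖ := norm_inner_le_norm u y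
      _ = σ j := by rw [hnu, hny, one_mul]
  -- combine
  calc ‖B.trace‖ = ‖∑ j, (star U * B * U) j j‖ := by
        rw [h1]; rfl
    _ ≤ ∑ j, ‖(star U * B * U) j j‖ :=
        norm_sum_le Finset.univ _
    _ ≤ ∑ j, σ j := Finset.sum_le_sum fun j _ => h3 j


/-- abbreviation for the singular values used in `schattenNorm`. -/
noncomputable def sv (B : Matrix (Fin n) (Fin n) ℂ) (i : Fin n) : ℝ :=
  (Matrix.posSemidef_conjTranspose_mul_self B).posSemidef_sqrt.1.eigenvalues i

lemma sv_nonneg (B : Matrix (Fin n) (Fin n) ℂ) (i : Fin n) : 0 ≤ sv B i :=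
  (Matrix.posSemidef_conjTranspose_mul_self B).posSemidef_sqrt.eigenvalues_nonneg i

lemma schattenNorm_eq (p : ℝ) (B : Matrix (Fin n) (Fin n) ℂ) :
    schattenNorm p B = (∑ i, sv B i ^ p) ^ (1 / p) := rfl


lemma sum_sv_pow (B : Matrix (Fin n) (Fin n) ℂ) (k : ℕ) :
    (((Bᴴ * B) ^ k).trace) = ((∑ i, sv B i ^ (2 * k) : ℝ) : ℂ) := by
  have hM := Matrix.posSemidef_conjTranspose_mul_self B
  have h1 : (Bᴴ * B) ^ k = hM.sqrt ^ (2 * k) := by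
    rw [pow_mul, sq_sqrt' hM]
  rw [h1, trace_pow_eq hM.posSemidef_sqrt.1 (2 * k)]
  rfl

lemma eig_of_eq_one {S : Matrix (Fin n) (Fin n) ℂ} (hS : S.IsHermitian) (h : S = 1) (i : Fin n) :
    hS.eigenvalues i = 1 := by
  subst h
  rw [hS.eigenvalues_eq, Matrix.one_mulVec, eigvec_dot_self hS]
  simp

lemma sv_one (i : Fin n) : sv (1 : Matrix (Fin n) (Fin n) ℂ) i = 1 := by
  have hM := Matrix.posSemidef_conjTranspose_mul_self (1 : Matrix (Fin n) (Fin n) ℂ)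
  have h1 : hM.sqrt = 1 := by
    have h2 : (1 : Matrix (Fin n) (Fin n) ℂ)ᴴ * 1 = 1 := by simp
    have hev : ∀ i, hM.1.eigenvalues i = 1 := eig_of_eq_one hM.1 h2
    have h3 : (fun i => ((√(hM.1.eigenvalues i) : ℝ) : ℂ)) = fun _ => 1 :=
      funext fun i => by rw [hev, Real.sqrt_one, Complex.ofReal_one]
    unfold Matrix.PosSemidef.sqrt
    rw [h3, Matrix.diagonal_one, Matrix.mul_one]
    exact (Matrix.mem_unitaryGroup_iff).mp hM.1.eigenvectorUnitary.2
  exact eig_of_eq_one _ h1 i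

lemma schattenNorm_one (p : ℝ) :
    schattenNorm p (1 : Matrix (Fin n) (Fin n) ℂ) = (n : ℝ) ^ (1 / p) := by
  rw [schattenNorm_eq]
  congr 1
  simp [sv_one]

/-- the backward direction -/
lemma backward {n : ℕ} (hn : 1 ≤ n) (p : ℝ) (hp : 1 ≤ p) (B : Matrix (Fin n) (Fin n) ℂ)
    (hB : B.trace = (n : ℂ)) :
    (n : ℝ) ^ (1 / p) ≤ schattenNorm p B := by
  have hp0 : (0:ℝ) < p := lt_of_lt_of_le one_pos hp
  have hn0 : (0:ℝ) < (n:ℝ) := by exact_mod_cast hn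
  have htr : (n : ℝ) ≤ ∑ i, sv B i := by
    have := abs_trace_le_sum_sigma B
    rw [hB] at this
    simpa [sv] using this
  have key : (n : ℝ) ≤ ∑ i, sv B i ^ p := by
    have hw : ∀ i ∈ (Finset.univ : Finset (Fin n)), (0:ℝ) ≤ (n:ℝ)⁻¹ := fun _ _ => by positivity
    have hw' : ∑ _i : Fin n, (n:ℝ)⁻¹ = 1 := by
      simp [Finset.sum_const]
      field_simp
    have hz : ∀ i ∈ Finset.univ, (0:ℝ) ≤ sv B i := fun i _ => sv_nonneg B i
    have hpm := Real.rpow_arith_mean_le_arith_mean_rpow Finset.univ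
      (fun _ => (n:ℝ)⁻¹) (sv B) hw hw' hz hp
    have hL : (1:ℝ) ≤ (∑ i, (n:ℝ)⁻¹ * sv B i) ^ p := by
      apply Real.one_le_rpow _ hp0.le
      rw [← Finset.mul_sum]
      calc (1:ℝ) = (n:ℝ)⁻¹ * n := by field_simp
        _ ≤ (n:ℝ)⁻¹ * ∑ i, sv B i := mul_le_mul_of_nonneg_left htr (by positivity)
    have : (1:ℝ) ≤ ∑ i, (n:ℝ)⁻¹ * sv B i ^ p := le_trans hL hpm
    rw [← Finset.mul_sum] at this
    calc (n:ℝ) = (n:ℝ) * 1 := by ring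
      _ ≤ (n:ℝ) * ((n:ℝ)⁻¹ * ∑ i, sv B i ^ p) := by
          exact mul_le_mul_of_nonneg_left this hn0.le
      _ = ∑ i, sv B i ^ p := by field_simp
  rw [schattenNorm_eq]
  exact Real.rpow_le_rpow hn0.le key (by positivity)

lemma expand_M (A : Matrix (Fin n) (Fin n) ℂ) (c : ℂ) (hcc : (starRingEnd ℂ c) * c = 1) (t : ℝ) :
    (1 + ((t:ℂ) * c) • A)ᴴ * (1 + ((t:ℂ) * c) • A)
      = 1 + ((t:ℂ) • (c • A + (starRingEnd ℂ c) • Aᴴ) + ((t:ℂ)^2) • (Aᴴ * A)) := by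
  have hγs : star ((t:ℂ) * c) = (t:ℂ) * (starRingEnd ℂ c) := by
    rw [star_mul']
    congr 1
    exact Complex.conj_ofReal t
  have e1 : (star ((t:ℂ)*c) • Aᴴ) * (((t:ℂ)*c) • A) = ((t:ℂ)^2) • (Aᴴ * A) := by
    rw [smul_mul_assoc, mul_smul_comm, smul_smul, hγs]
    congr 1
    linear_combination (t:ℂ)^2 * hcc
  rw [Matrix.conjTranspose_add, Matrix.conjTranspose_one, Matrix.conjTranspose_smul]
  rw [Matrix.add_mul, Matrix.mul_add, Matrix.mul_add, Matrix.one_mul, Matrix.mul_one, e1]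
  rw [smul_add, smul_smul, smul_smul, hγs, Matrix.one_mul]
  abel

lemma trace_one_add (E : Matrix (Fin n) (Fin n) ℂ) :
    (1 + E).trace = (n : ℂ) + E.trace := by
  rw [Matrix.trace_add, Matrix.trace_one]
  simp

lemma trace_one_add_sq (E : Matrix (Fin n) (Fin n) ℂ) :
    ((1 + E) * (1 + E)).trace = (n : ℂ) + E.trace + E.trace + (E * E).trace := by
  rw [Matrix.mul_add, Matrix.add_mul, Matrix.add_mul, Matrix.one_mul, Matrix.mul_one]
  rw [Matrix.trace_add, Matrix.trace_add, Matrix.trace_add, Matrix.trace_one]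
  simp
  ring

lemma trace_E_sq (H K : Matrix (Fin n) (Fin n) ℂ) (t : ℝ) :
    ((((t:ℂ)) • H + ((t:ℂ)^2) • K) * (((t:ℂ)) • H + ((t:ℂ)^2) • K)).trace
      = (t:ℂ)^2 * (H * H).trace + 2 * (t:ℂ)^3 * (H * K).trace + (t:ℂ)^4 * (K * K).trace := by
  rw [Matrix.mul_add, Matrix.add_mul, Matrix.add_mul]
  simp only [smul_mul_assoc, mul_smul_comm, smul_smul, Matrix.trace_add, Matrix.trace_smul,
    smul_eq_mul]
  rw [Matrix.trace_mul_comm K H]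
  ring

lemma trace_E (H K : Matrix (Fin n) (Fin n) ℂ) (t : ℝ) :
    ((((t:ℂ)) • H + ((t:ℂ)^2) • K)).trace = (t:ℂ) * H.trace + (t:ℂ)^2 * K.trace := by
  rw [Matrix.trace_add, Matrix.trace_smul, Matrix.trace_smul, smul_eq_mul, smul_eq_mul]


set_option maxHeartbeats 2000000 in
lemma forward (p : ℝ) (hp : 1 ≤ p) (A : Matrix (Fin n) (Fin n) ℂ)
    (hτ : A.trace ≠ 0) :
    ∃ γ : ℂ, schattenNorm p (1 + γ • A) < (n : ℝ) ^ (1 / p) := by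
  classical
  have hp0 : (0:ℝ) < p := lt_of_lt_of_le one_pos hp
  set τ : ℂ := A.trace with hτdef
  set aτ : ℝ := ‖τ‖ with haτdef
  have haτ : 0 < aτ := by simpa [haτdef] using (norm_pos_iff.mpr hτ)
  set c : ℂ := -(starRingEnd ℂ τ) / (aτ : ℂ) with hcdef
  have haτ0 : (aτ : ℂ) ≠ 0 := by exact_mod_cast ne_of_gt haτ
  have hcτ : c * τ = -((aτ : ℝ) : ℂ) := by
    rw [hcdef, div_mul_eq_mul_div, neg_mul, mul_comm, Complex.mul_conj, Complex.normSq_eq_norm_sq,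
      ← haτdef]
    push_cast
    field_simp
  have hcc : (starRingEnd ℂ c) * c = 1 := by
    have h1 : ‖c‖ = 1 := by
      rw [hcdef, norm_div, norm_neg, Complex.norm_conj, Complex.norm_real, Real.norm_eq_abs,
        abs_of_pos haτ, ← haτdef, div_self (ne_of_gt haτ)]
    rw [mul_comm, Complex.mul_conj, Complex.normSq_eq_norm_sq, h1]
    norm_num
  -- fixed matrices and their traces
  set H : Matrix (Fin n) (Fin n) ℂ := c • A + (starRingEnd ℂ c) • Aᴴ with hHdef
  set K : Matrix (Fin n) (Fin n) ℂ := Aᴴ * A with hKdef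
  have htrH : H.trace = -2 * ((aτ : ℝ) : ℂ) := by
    rw [hHdef, Matrix.trace_add, Matrix.trace_smul, Matrix.trace_smul,
      Matrix.trace_conjTranspose, ← hτdef, smul_eq_mul, smul_eq_mul]
    have h2 : (starRingEnd ℂ c) * star τ = starRingEnd ℂ (c * τ) := by
      rw [_root_.map_mul]; rfl
    rw [h2, hcτ]
    simp
    ring
  -- constants
  set q : ℝ := p / 2 with hqdef
  have hq0 : (0:ℝ) < q := by positivity
  set L : ℝ := q * (|q - 1| * 2 ^ |q - 2|) with hLdef
  have hL0 : 0 ≤ L := by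
    apply mul_nonneg hq0.le
    exact mul_nonneg (abs_nonneg _) (Real.rpow_nonneg (by norm_num) _)
  set C : ℝ := ‖(H*H).trace‖ + 2 * ‖(H*K).trace‖
      + ‖(K*K).trace‖ with hCdef
  have hC0 : 0 ≤ C := by positivity
  set R : ℝ := q * ‖K.trace‖ + L * C with hRdef
  have hR0 : 0 ≤ R := by positivity
  set t : ℝ := min 1 (min (1 / (2 * (Real.sqrt C + 1))) (q * aτ / (R + 1))) with htdef
  have ht0 : 0 < t := by
    apply lt_min one_pos
    exact lt_min (by positivity) (by positivity)
  have ht1 : t ≤ 1 := min_le_left _ _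
  have htC : Real.sqrt C * t ≤ 1 / 2 := by
    have h1 : t ≤ 1 / (2 * (Real.sqrt C + 1)) := le_trans (min_le_right _ _) (min_le_left _ _)
    have h2 : 0 ≤ Real.sqrt C := Real.sqrt_nonneg _
    rw [le_div_iff₀ (by positivity)] at h1
    nlinarith
  have htR : t * R < q * aτ := by
    have h1 : t ≤ q * aτ / (R + 1) := le_trans (min_le_right _ _) (min_le_right _ _)
    have h3 : t * R ≤ (q * aτ / (R + 1)) * R := mul_le_mul_of_nonneg_right h1 hR0
    have h4 : (q * aτ / (R + 1)) * R < q * aτ := by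
      rw [div_mul_eq_mul_div, div_lt_iff₀ (by positivity)]
      nlinarith [mul_pos hq0 haτ]
    exact lt_of_le_of_lt h3 h4
  -- the perturbed matrix
  refine ⟨(t : ℂ) * c, ?_⟩
  set B : Matrix (Fin n) (Fin n) ℂ := 1 + ((t:ℂ) * c) • A with hBdef
  set E : Matrix (Fin n) (Fin n) ℂ := (t : ℂ) • H + ((t : ℂ))^2 • K with hEdef
  have hM1 : Bᴴ * B = 1 + E := expand_M A c hcc t
  set σ : Fin n → ℝ := sv B with hσdef
  have hσ0 : ∀ i, 0 ≤ σ i := fun i => sv_nonneg B i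
  set μ : Fin n → ℝ := fun i => σ i ^ 2 - 1 with hμdef
  -- trace identities
  have htrE : E.trace = ((-2 * t * aτ : ℝ) : ℂ) + ((t^2 : ℝ) : ℂ) * K.trace := by
    rw [hEdef, trace_E, htrH]
    push_cast
    ring
  have htrE2 : (E * E).trace = (t:ℂ)^2 * (H * H).trace + 2 * (t:ℂ)^3 * (H * K).trace
      + (t:ℂ)^4 * (K * K).trace := trace_E_sq H K t
  -- real sums
  have hsum2 : ∑ i, σ i ^ 2 = (n : ℝ) + (E.trace).re := by
    have h0 := sum_sv_pow B 1
    rw [pow_one, hM1, trace_one_add] at h0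
    have h2 := congrArg Complex.re h0
    simp only [Complex.add_re, Complex.natCast_re, Complex.ofReal_re, mul_one] at h2
    exact h2.symm
  have hsum4 : ∑ i, σ i ^ 4 = (n : ℝ) + 2 * (E.trace).re + ((E * E).trace).re := by
    have h0 := sum_sv_pow B 2
    rw [pow_two, hM1, trace_one_add_sq] at h0
    rw [show (2:ℕ) * 2 = 4 by norm_num] at h0
    have h3 := congrArg Complex.re h0
    simp only [Complex.add_re, Complex.natCast_re, Complex.ofReal_re] at h3
    rw [← h3]; ring
  clear_value μ σ E B t R C L q K H c aτ τ
  have hμsum : ∑ i, μ i = (E.trace).re := by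
    rw [hμdef]
    rw [Finset.sum_sub_distrib, hsum2]
    simp
  have hμ2sum : ∑ i, μ i ^ 2 = ((E * E).trace).re := by
    have h1 : ∀ i, μ i ^ 2 = σ i ^ 4 - 2 * σ i ^ 2 + 1 := by
      intro i; rw [hμdef]; ring
    calc ∑ i, μ i ^ 2 = ∑ i, (σ i ^ 4 - 2 * σ i ^ 2 + 1) := by
          exact Finset.sum_congr rfl fun i _ => h1 i
      _ = (∑ i, σ i ^ 4) - 2 * (∑ i, σ i ^ 2) + n := by
          rw [Finset.sum_add_distrib, Finset.sum_sub_distrib, ← Finset.mul_sum]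
          simp
      _ = ((E * E).trace).re := by rw [hsum4, hsum2]; ring
  -- bounds
  have hreE : (E.trace).re = -2 * t * aτ + t^2 * (K.trace).re := by
    rw [htrE]
    simp only [Complex.add_re, Complex.mul_re, Complex.ofReal_re, Complex.ofReal_im]
    ring
  have habs : ∀ (m : ℕ) (Z : ℂ), ‖(t:ℂ)^m * Z‖ = t^m * ‖Z‖ := by
    intro m Z
    rw [norm_mul, norm_pow, Complex.norm_real, Real.norm_eq_abs, abs_of_pos ht0]
  have hreE2 : ((E * E).trace).re ≤ C * t^2 := by
    have h1 : ((E * E).trace).re ≤ ‖(E * E).trace‖ := Complex.re_le_norm _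
    have e2 : ‖2 * (t:ℂ)^3 * (H*K).trace‖ = 2 * t^3 * ‖(H*K).trace‖ := by
      rw [norm_mul, norm_mul, Complex.norm_ofNat, norm_pow, Complex.norm_real, Real.norm_eq_abs,
        abs_of_pos ht0]
    have i2 : ‖(t:ℂ)^2 * (H*H).trace + 2 * (t:ℂ)^3 * (H*K).trace‖
        ≤ t^2 * ‖(H*H).trace‖ + 2 * t^3 * ‖(H*K).trace‖ := by
      refine le_trans (norm_add_le _ _) ?_
      rw [habs 2, e2]
    have h2 : ‖(E * E).trace‖ ≤ t^2 * ‖(H*H).trace‖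
        + 2 * t^3 * ‖(H*K).trace‖ + t^4 * ‖(K*K).trace‖ := by
      rw [htrE2]
      refine le_trans (norm_add_le _ _) ?_
      rw [habs 4]
      exact add_le_add_left i2 _
    have h3 : t^3 ≤ t^2 := pow_le_pow_of_le_one ht0.le ht1 (by norm_num)
    have h4 : t^4 ≤ t^2 := pow_le_pow_of_le_one ht0.le ht1 (by norm_num)
    have key : ∀ x1 x2 x3 : ℝ, 0 ≤ x2 → 0 ≤ x3 →
        t^2 * x1 + 2 * t^3 * x2 + t^4 * x3 ≤ (x1 + 2 * x2 + x3) * t^2 := by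
      intro x1 x2 x3 hx2 hx3
      nlinarith
    have h5 : t^2 * ‖(H*H).trace‖ + 2 * t^3 * ‖(H*K).trace‖
        + t^4 * ‖(K*K).trace‖ ≤ C * t^2 := by
      rw [hCdef]
      exact key _ _ _ (norm_nonneg _) (norm_nonneg _)
    linarith
  have hμsmall : ∀ i, |μ i| ≤ 1/2 := by
    intro i
    have h1 : μ i ^ 2 ≤ ∑ j, μ j ^ 2 :=
      Finset.single_le_sum (fun j _ => sq_nonneg (μ j)) (Finset.mem_univ i)
    have h2 : μ i ^ 2 ≤ C * t^2 := by
      rw [hμ2sum] at h1; linarith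
    have h3 : |μ i| ≤ Real.sqrt C * t := by
      have h4 : (Real.sqrt C * t)^2 = C * t^2 := by
        rw [mul_pow, Real.sq_sqrt hC0]
      calc |μ i| = Real.sqrt (μ i ^ 2) := (Real.sqrt_sq_eq_abs _).symm
        _ ≤ Real.sqrt ((Real.sqrt C * t)^2) := Real.sqrt_le_sqrt (by rw [h4]; exact h2)
        _ = |Real.sqrt C * t| := Real.sqrt_sq_eq_abs _
        _ = Real.sqrt C * t := abs_of_nonneg (mul_nonneg (Real.sqrt_nonneg _) ht0.le)
    linarith
  -- Taylor bound
  have htay : ∀ i, (σ i ^ 2) ^ q ≤ 1 + q * μ i + L * μ i ^ 2 := by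
    intro i
    have h1 := hμsmall i
    rw [abs_le] at h1
    have := rpow_taylor q hq0 (x := σ i ^ 2) (by rw [hμdef] at h1; simp at h1; linarith [h1.1])
      (by rw [hμdef] at h1; simp at h1; linarith [h1.2])
    rw [← hLdef] at this
    calc (σ i ^2) ^ q ≤ 1 + q * (σ i^2 - 1) + L * (σ i^2 - 1)^2 := this
      _ = 1 + q * μ i + L * μ i ^ 2 := by rw [hμdef]
  -- relate rpow
  have hrpow : ∀ i, (σ i ^ 2 : ℝ) ^ q = σ i ^ p := by
    intro i
    rw [← Real.rpow_natCast (σ i) 2, ← Real.rpow_mul (hσ0 i)]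
    congr 1
    push_cast
    rw [hqdef]
    ring
  -- main estimate
  have hmain : ∑ i, σ i ^ p < (n : ℝ) := by
    have h1 : ∑ i, σ i ^ p ≤ (n:ℝ) + q * (∑ i, μ i) + L * (∑ i, μ i ^ 2) := by
      calc ∑ i, σ i ^ p = ∑ i, (σ i ^2) ^ q := by
            exact Finset.sum_congr rfl fun i _ => (hrpow i).symm
        _ ≤ ∑ i, (1 + q * μ i + L * μ i ^ 2) :=
            Finset.sum_le_sum fun i _ => htay i
        _ = (n:ℝ) + q * (∑ i, μ i) + L * (∑ i, μ i ^ 2) := by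
            rw [Finset.sum_add_distrib, Finset.sum_add_distrib, ← Finset.mul_sum, ← Finset.mul_sum]
            simp
    have h2 : q * (∑ i, μ i) ≤ -2 * q * t * aτ + t^2 * (q * ‖K.trace‖) := by
      rw [hμsum, hreE]
      have h := Complex.re_le_norm (K.trace)
      have h' : t^2 * (K.trace).re ≤ t^2 * ‖K.trace‖ :=
        mul_le_mul_of_nonneg_left h (sq_nonneg t)
      nlinarith [mul_le_mul_of_nonneg_left h' hq0.le]
    have h3 : L * (∑ i, μ i ^ 2) ≤ L * (C * t^2) := by
      rw [hμ2sum]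
      exact mul_le_mul_of_nonneg_left hreE2 hL0
    have h4 : ∑ i, σ i ^ p ≤ (n:ℝ) - 2*q*t*aτ + t^2 * R := by
      rw [hRdef]
      calc ∑ i, σ i ^ p ≤ (n:ℝ) + q * (∑ i, μ i) + L * (∑ i, μ i ^ 2) := h1
        _ ≤ (n:ℝ) + (-2 * q * t * aτ + t^2 * (q * ‖K.trace‖)) + L * (C * t^2) := by
            linarith
        _ = (n:ℝ) - 2*q*t*aτ + t^2 * (q * ‖K.trace‖ + L * C) := by ring
    have h5 : t^2 * R < q * t * aτ := by
      have : t * (t * R) < t * (q * aτ) := by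
        exact mul_lt_mul_of_pos_left htR ht0
      calc t^2 * R = t * (t * R) := by ring
        _ < t * (q * aτ) := this
        _ = q * t * aτ := by ring
    have h6 : 0 < q * t * aτ := by positivity
    linarith
  -- conclude
  have hfin : schattenNorm p B = (∑ i, σ i ^ p) ^ (1 / p) := by
    rw [hσdef]; exact schattenNorm_eq p B
  rw [hfin]
  have hsnn : 0 ≤ ∑ i, σ i ^ p := Finset.sum_nonneg fun i _ => Real.rpow_nonneg (hσ0 i) p
  exact Real.rpow_lt_rpow hsnn hmain (by positivity)

end BJAux

theorem identity_bj_orthogonal_iff_trace_eq_zero {n : ℕ} (hn : 1 ≤ n) (p : ℝ) (hp : 1 ≤ p)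
    (A : Matrix (Fin n) (Fin n) ℂ) :
    (∀ γ : ℂ, schattenNorm p (1 : Matrix (Fin n) (Fin n) ℂ) ≤ schattenNorm p (1 + γ • A)) ↔
      A.trace = 0 := by
  constructor
  · intro h
    by_contra hτ
    obtain ⟨γ, hγ⟩ := BJAux.forward p hp A hτ
    have h2 := h γ
    rw [BJAux.schattenNorm_one] at h2
    linarith
  · intro hA γ
    have htr : (1 + γ • A).trace = (n : ℂ) := by
      rw [Matrix.trace_add, Matrix.trace_smul, hA, Matrix.trace_one]
      simp
    rw [BJAux.schattenNorm_one]
    exact BJAux.backward hn p hp _ htr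
end

section
/- Let H be a nonzero complex Hilbert space and A a bounded linear operator on H. Then A is norm-parallel to the identity operator I, i.e. there exists λ ∈ ℂ with |λ| = 1 such that ‖A + λ·I‖ = ‖A‖ + 1, if and only if ‖A‖ = w(A), where w(A) = sup{ |⟨Ax, x⟩| : x ∈ H, ‖x‖ = 1 } is the numerical radius of A. -/
open ComplexConjugate

/-- The numerical radius of a bounded linear operator on a complex Hilbert space. -/
noncomputable def numRadius {H : Type*} [NormedAddCommGroup H] [InnerProductSpace ℂ H]
    (A : H →L[ℂ] H) : ℝ :=
  sSup {r : ℝ | ∃ x : H, ‖x‖ = 1 ∧ r = ‖(inner ℂ (A x) x : ℂ)‖}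

namespace ParallelAux

variable {H : Type*} [NormedAddCommGroup H] [InnerProductSpace ℂ H]

lemma abs_inner_le_opNorm (A : H →L[ℂ] H) {x : H} (hx : ‖x‖ = 1) :
    ‖(inner ℂ (A x) x : ℂ)‖ ≤ ‖A‖ := by
  calc ‖(inner ℂ (A x) x : ℂ)‖ ≤ ‖A x‖ * ‖x‖ := norm_inner_le_norm _ _
    _ ≤ (‖A‖ * ‖x‖) * ‖x‖ := by gcongr; exact A.le_opNorm x
    _ = ‖A‖ := by rw [hx]; ring

lemma bddAboveS (A : H →L[ℂ] H) :
    BddAbove {r : ℝ | ∃ x : H, ‖x‖ = 1 ∧ r = ‖(inner ℂ (A x) x : ℂ)‖} :=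
  ⟨‖A‖, fun _ ⟨_, hx, hr⟩ => hr ▸ abs_inner_le_opNorm A hx⟩

lemma exists_unit [Nontrivial H] : ∃ x : H, ‖x‖ = 1 := by
  obtain ⟨x, hx⟩ := exists_ne (0 : H)
  have hn : ‖x‖ ≠ 0 := norm_ne_zero_iff.mpr hx
  refine ⟨(‖x‖⁻¹ : ℝ) • x, ?_⟩
  rw [norm_smul, norm_inv, norm_norm, inv_mul_cancel₀ hn]

lemma nonemptyS [Nontrivial H] (A : H →L[ℂ] H) :
    {r : ℝ | ∃ x : H, ‖x‖ = 1 ∧ r = ‖(inner ℂ (A x) x : ℂ)‖}.Nonempty := by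
  obtain ⟨x, hx⟩ := exists_unit (H := H)
  exact ⟨_, x, hx, rfl⟩

lemma numRadius_le (A : H →L[ℂ] H) : numRadius A ≤ ‖A‖ :=
  Real.sSup_le (fun _ ⟨_, hx, hr⟩ => hr ▸ abs_inner_le_opNorm A hx) (norm_nonneg A)

lemma le_numRadius (A : H →L[ℂ] H) {x : H} (hx : ‖x‖ = 1) :
    ‖(inner ℂ (A x) x : ℂ)‖ ≤ numRadius A :=
  le_csSup (bddAboveS A) ⟨x, hx, rfl⟩

lemma exists_gt [Nontrivial H] (A : H →L[ℂ] H) {c : ℝ} (hc : c < numRadius A) :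
    ∃ x : H, ‖x‖ = 1 ∧ c < ‖(inner ℂ (A x) x : ℂ)‖ := by
  obtain ⟨r, ⟨x, hx, rfl⟩, h⟩ := exists_lt_of_lt_csSup (nonemptyS A) hc
  exact ⟨x, hx, h⟩

lemma norm_one_clm [Nontrivial H] [CompleteSpace H] : ‖(1 : H →L[ℂ] H)‖ = 1 :=
  ContinuousLinearMap.norm_id

lemma norm_add_smul_le [Nontrivial H] [CompleteSpace H] (A : H →L[ℂ] H) {lam : ℂ}
    (hlam : ‖lam‖ = 1) : ‖A + lam • (1 : H →L[ℂ] H)‖ ≤ ‖A‖ + 1 := by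
  calc ‖A + lam • (1 : H →L[ℂ] H)‖ ≤ ‖A‖ + ‖lam • (1 : H →L[ℂ] H)‖ := norm_add_le _ _
    _ = ‖A‖ + 1 := by
        rw [norm_smul, norm_one_clm, hlam, mul_one]

lemma inner_add_smul (A : H →L[ℂ] H) (lam : ℂ) {x : H} (hx : ‖x‖ = 1) :
    (inner ℂ ((A + lam • (1 : H →L[ℂ] H)) x) x : ℂ) = inner ℂ (A x) x + conj lam := by
  have hxx : (inner ℂ x x : ℂ) = 1 := by
    rw [inner_self_eq_norm_sq_to_K, hx]; norm_num
  simp [ContinuousLinearMap.add_apply, ContinuousLinearMap.smul_apply,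
    ContinuousLinearMap.one_apply, inner_add_left, inner_smul_left, hxx, hx]

end ParallelAux

open ParallelAux

theorem parallel_to_identity_iff_norm_eq_numericalRadius
    {H : Type*} [NormedAddCommGroup H] [InnerProductSpace ℂ H]
    [CompleteSpace H] [Nontrivial H] (A : H →L[ℂ] H) :
    (∃ lam : ℂ, ‖lam‖ = 1 ∧ ‖A + lam • (1 : H →L[ℂ] H)‖ = ‖A‖ + 1) ↔
      ‖A‖ = numRadius A := by
  constructor
  · rintro ⟨lam, hlam, heq⟩
    refine le_antisymm ?_ (numRadius_le A)
    set B := A + lam • (1 : H →L[ℂ] H) with hB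
    refine le_of_forall_pos_le_add ?_
    intro δ hδ
    set ε : ℝ := min (δ / (2 * (‖A‖ + 1))) 1 with hε
    have hεpos : 0 < ε := lt_min (by positivity) one_pos
    have hε1 : ε ≤ 1 := min_le_right _ _
    have hεδ : ε * (‖A‖ + 1) ≤ δ / 2 := by
      have h1 : ε ≤ δ / (2 * (‖A‖ + 1)) := min_le_left _ _
      have h2 : (0:ℝ) < ‖A‖ + 1 := by positivity
      rw [div_mul_eq_div_div] at h1
      calc ε * (‖A‖ + 1) ≤ (δ / 2 / (‖A‖ + 1)) * (‖A‖ + 1) := by gcongr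
        _ = δ / 2 := by field_simp
    -- find unit vector with ‖B x‖ > ‖A‖ + 1 - ε
    have hr : ‖A‖ + 1 - ε < ‖B‖ := by rw [heq]; linarith
    obtain ⟨x, hx1, hxr⟩ := B.exists_lt_apply_of_lt_opNorm hr
    have hrnn : (0:ℝ) ≤ ‖A‖ + 1 - ε := by
      have := norm_nonneg A; linarith
    have hxne : x ≠ 0 := by
      intro h; rw [h] at hxr; simp at hxr; linarith
    have hxn : ‖x‖ ≠ 0 := norm_ne_zero_iff.mpr hxne
    set u : H := ((‖x‖⁻¹ : ℝ) : ℂ) • x with hu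
    have hun : ‖u‖ = 1 := by
      rw [hu, norm_smul]
      simp [abs_of_nonneg (inv_nonneg.mpr (norm_nonneg x)), inv_mul_cancel₀ hxn]
    have hBu : ‖A‖ + 1 - ε < ‖B u‖ := by
      rw [hu, map_smul, norm_smul]
      have h1 : (1:ℝ) ≤ ‖((‖x‖⁻¹ : ℝ) : ℂ)‖ := by
        simp only [Complex.norm_real, Real.norm_eq_abs,
          abs_of_nonneg (inv_nonneg.mpr (norm_nonneg x))]
        rw [le_inv_comm₀] <;> first | simp; exact hx1.le | positivity
        
      calc ‖A‖ + 1 - ε < ‖B x‖ := hxr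
        _ = 1 * ‖B x‖ := (one_mul _).symm
        _ ≤ ‖((‖x‖⁻¹ : ℝ) : ℂ)‖ * ‖B x‖ := by gcongr
    -- now estimate
    have hBu2 : ‖B u‖ ^ 2 ≤ ‖A‖ ^ 2 + 2 * numRadius A + 1 := by
      have hexp : B u = A u + lam • u := by
        simp [hB, ContinuousLinearMap.add_apply, ContinuousLinearMap.smul_apply,
          ContinuousLinearMap.one_apply]
      rw [hexp, norm_add_sq (𝕜 := ℂ)]
      have h1 : ‖A u‖ ^ 2 ≤ ‖A‖ ^ 2 := by
        have := A.le_opNorm u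
        rw [hun, mul_one] at this
        nlinarith [norm_nonneg (A u)]
      have h2 : RCLike.re (inner ℂ (A u) (lam • u) : ℂ) ≤ numRadius A := by
        calc RCLike.re (inner ℂ (A u) (lam • u) : ℂ) ≤ ‖(inner ℂ (A u) (lam • u) : ℂ)‖ :=
              (Complex.re_le_norm _)
          _ = ‖lam‖ * ‖(inner ℂ (A u) u : ℂ)‖ := by
              rw [inner_smul_right]; simp
          _ = ‖(inner ℂ (A u) u : ℂ)‖ := by rw [hlam, one_mul]
          _ ≤ numRadius A := le_numRadius A hun
      have h3 : ‖lam • u‖ = 1 := by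
        rw [norm_smul, hun, hlam, mul_one]
      rw [h3]
      nlinarith
    have hsq : (‖A‖ + 1 - ε) ^ 2 < ‖A‖ ^ 2 + 2 * numRadius A + 1 := by
      have := hBu
      nlinarith [norm_nonneg (B u)]
    nlinarith [numRadius_le A]
  · intro h
    have hcont : Continuous fun lam : ℂ => ‖A + lam • (1 : H →L[ℂ] H)‖ :=
      (continuous_const.add (continuous_id.smul continuous_const)).norm
    obtain ⟨lam, hmem, hmax⟩ := (isCompact_sphere (0:ℂ) 1).exists_isMaxOn
      ⟨1, by simp⟩ hcont.continuousOn
    have hlam : ‖lam‖ = 1 := by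
      simpa using hmem
    refine ⟨lam, hlam, le_antisymm (norm_add_smul_le A hlam) ?_⟩
    by_contra hlt
    push_neg at hlt
    set ε : ℝ := ‖A‖ + 1 - ‖A + lam • (1 : H →L[ℂ] H)‖ with hε
    have hεpos : 0 < ε := by rw [hε]; linarith
    have hwa : ‖A‖ - ε < numRadius A := by rw [← h]; linarith
    obtain ⟨x, hx, hcx⟩ := exists_gt A hwa
    set c : ℂ := inner ℂ (A x) x with hc
    set μ : ℂ := if c = 0 then 1 else conj c / (‖c‖ : ℂ) with hμ
    have hμ1 : ‖μ‖ = 1 := by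
      rw [hμ]
      split_ifs with h0
      · simp
      · rw [norm_div]
        rw [Complex.norm_conj, Complex.norm_real, norm_norm]
        exact div_self (norm_ne_zero_iff.mpr h0)
    have hkey : ‖c‖ + 1 ≤ ‖A + μ • (1 : H →L[ℂ] H)‖ := by
      have h1 : ‖(inner ℂ ((A + μ • (1 : H →L[ℂ] H)) x) x : ℂ)‖ ≤
          ‖A + μ • (1 : H →L[ℂ] H)‖ := abs_inner_le_opNorm _ hx
      have h2 : (inner ℂ ((A + μ • (1 : H →L[ℂ] H)) x) x : ℂ) = c + conj μ :=
        inner_add_smul A μ hx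
      have h3 : ‖c + conj μ‖ = ‖c‖ + 1 := by
        rw [hμ]
        split_ifs with h0
        · simp [h0]
        · have habs : (0:ℝ) < ‖c‖ := norm_pos_iff.mpr h0
          have : conj (conj c / (‖c‖ : ℂ)) = c / (‖c‖ : ℂ) := by
            rw [map_div₀, Complex.conj_conj, Complex.conj_ofReal]
          rw [this]
          have : c + c / (‖c‖ : ℂ) = c * (1 + (‖c‖ : ℂ)⁻¹) := by
            ring
          rw [this, norm_mul]
          have h4 : ‖1 + ((‖c‖ : ℝ) : ℂ)⁻¹‖ = 1 + (‖c‖)⁻¹ := by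
            rw [← Complex.ofReal_inv, ← Complex.ofReal_one, ← Complex.ofReal_add,
              Complex.norm_real, Real.norm_eq_abs, abs_of_pos (by positivity)]
          rw [h4]
          field_simp
      rw [h2, h3] at h1
      exact h1
    have hμmem : μ ∈ Metric.sphere (0:ℂ) 1 := by
      simp [hμ1]
    have hle := hmax hμmem
    simp only [Set.mem_setOf_eq] at hle
    have : ‖A + μ • (1 : H →L[ℂ] H)‖ ≤ ‖A + lam • (1 : H →L[ℂ] H)‖ := hle
    linarith
end
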